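/- arXiv:1509.08193 — 3 statements merged into one kernel-verified Lean document; each statement's English description precedes it below -/
import Mathlib

section
/- (Fundamental Budget Requirement) In a symmetric contract game with symmetric equilibrium effort $a^*$, if the estimation quality satisfies $\eta(a^*)\leq\epsilon$, then the budget of any ex ante individually rational contract is lower bounded by $B \geq \frac{n}{\alpha}f(\eta^{-1}(\epsilon))$. -/
open Finset

/-- Fundamental Budget Requirement: in the symmetric contract game, if
the estimation quality at the symmetric equilibrium satisfies `η(a*) ≤ ε`, then the
budget of any ex ante individually rational contract is at least `(n/α) f(η⁻¹(ε))`. -/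
theorem fundamental_budget_requirement (n : ℕ) (hn : 1 ≤ n) (α ε : ℝ) (hα : 0 < α)
    (η f : ℝ → ℝ)
    (hηanti : StrictAntiOn η (Set.Ici 0)) (hηcont : ContinuousOn η (Set.Ici 0))
    (hfmono : StrictMonoOn f (Set.Ici 0))
    (astar : ℝ) (hastar : 0 ≤ astar)
    (Ep : Fin n → ℝ) (hEp : ∀ i, 0 ≤ Ep i)
    (hIR : ∀ i, 0 ≤ α * Ep i - f astar)
    (B e : ℝ) (hB : B = ∑ i, Ep i)
    (he : 0 ≤ e) (hinv : η e = ε)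
    (hquality : η astar ≤ ε) :
    (n : ℝ) / α * f e ≤ B := by
  have hea : e ≤ astar := by
    by_contra h
    push_neg at h
    have := hηanti hastar he h
    linarith [hinv ▸ this]
  have hfe : f e ≤ f astar := hfmono.monotoneOn he hastar hea
  have key : ∀ i : Fin n, f e / α ≤ Ep i := fun i => by
    have := hIR i
    rw [div_le_iff₀ hα] at *
    nlinarith
  calc (n : ℝ) / α * f e = ∑ _i : Fin n, f e / α := by
        rw [Finset.sum_const, card_univ, Fintype.card_fin]
        ring
    _ ≤ ∑ i, Ep i := Finset.sum_le_sum fun i _ => key i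
    _ = B := hB.symm
end

section
/- (Fundamental Performance Limit) In a symmetric contract game, any ex ante individually rational compensation contract with budget $B\leq\beta$ yields estimation quality $\mathbb{E}\{(x-\hat{x})^2\} \geq \eta(f^{-1}(\beta\alpha/n))$ at a symmetric equilibrium. -/
open Finset

/-- Fundamental Performance Limit: in the symmetric contract game, any
ex ante individually rational contract with budget `B ≤ β` yields estimation error
`η(a*) ≥ η(f⁻¹(βα/n))` at the symmetric equilibrium. -/
theorem fundamental_performance_limit (n : ℕ) (hn : 1 ≤ n) (α β : ℝ) (hα : 0 < α)
    (η f : ℝ → ℝ)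
    (hηanti : StrictAntiOn η (Set.Ici 0))
    (hfmono : StrictMonoOn f (Set.Ici 0)) (hfcont : ContinuousOn f (Set.Ici 0))
    (astar : ℝ) (hastar : 0 ≤ astar)
    (Ep : Fin n → ℝ) (hEp : ∀ i, 0 ≤ Ep i)
    (hIR : ∀ i, 0 ≤ α * Ep i - f astar)
    (B af : ℝ) (hB : B = ∑ i, Ep i) (hBβ : B ≤ β)
    (haf : 0 ≤ af) (hfinv : f af = β * α / n) :
    η af ≤ η astar := by
  have hnpos : (0:ℝ) < n := by exact_mod_cast hn
  have hsum : (n : ℝ) * f astar ≤ α * B := by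
    rw [hB, Finset.mul_sum]
    calc (n : ℝ) * f astar = ∑ _i : Fin n, f astar := by
          simp [Finset.sum_const, mul_comm]
      _ ≤ ∑ i, α * Ep i := Finset.sum_le_sum (fun i _ => by linarith [hIR i])
  have hff : f astar ≤ f af := by
    rw [hfinv]
    rw [le_div_iff₀ hnpos]
    nlinarith
  have hle : astar ≤ af := by
    by_contra h
    push_neg at h
    exact absurd hff (not_le.mpr (hfmono haf hastar h))
  rcases eq_or_lt_of_le hle with h | h
  · rw [h]
  · exact le_of_lt (hηanti hastar haf h)
end

section
/- With $\delta = \gamma\frac{n-1}{n}\epsilon + \frac{1}{\alpha}f(\eta^{-1}(\epsilon))$ and symmetric equilibrium efforts $a_i^* = \eta^{-1}(\epsilon)$ for all $i$, the total expected budget $B = \sum_{i=1}^n\big[\delta - \gamma\big(\big(\frac{n-1}{n}\big)^2\eta(a_i^*)+\frac{1}{n^2}\sum_{j\neq i}\eta(a_j^*)\big)\big]$ equals exactly $\frac{n}{\alpha}f(\eta^{-1}(\epsilon))$, i.e., the contract achieves the fundamental budget lower bound. -/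
open Finset

/-- with `δ = γ(n-1)ε/n + f(η⁻¹(ε))/α` and symmetric equilibrium efforts
`a* i = η⁻¹(ε)`, the total expected budget equals exactly `(n/α) f(η⁻¹(ε))`: the
contract attains the fundamental budget lower bound. -/
theorem optimal_contract_budget (n : ℕ) (hn : 1 ≤ n) (α γ ε : ℝ) (hα : 0 < α)
    (hγ : 0 ≤ γ) (η f : ℝ → ℝ) (e : ℝ) (he : 0 ≤ e) (hinv : η e = ε) :
    ∑ i : Fin n, ((γ * (((n : ℝ) - 1) / n) * ε + f e / α)
        - γ * ((((n : ℝ) - 1) / n) ^ 2 * η e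
          + (1 / (n : ℝ) ^ 2) * ∑ _j ∈ Finset.univ.erase i, η e))
      = (n : ℝ) / α * f e := by
  have hn0 : (n : ℝ) ≠ 0 := by positivity
  have : ∀ i : Fin n, ((γ * (((n : ℝ) - 1) / n) * ε + f e / α)
        - γ * ((((n : ℝ) - 1) / n) ^ 2 * η e
          + (1 / (n : ℝ) ^ 2) * ∑ _j ∈ Finset.univ.erase i, η e)) = f e / α := by
    intro i
    rw [Finset.sum_const, Finset.card_erase_of_mem (mem_univ i), card_univ, Fintype.card_fin,
      hinv]
    have h1 : ((n : ℝ) - 1) ≥ 0 := by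
      have : (1:ℝ) ≤ n := by exact_mod_cast hn
      linarith
    push_cast [Nat.cast_sub hn]
    field_simp
    rw [nsmul_eq_mul, Nat.cast_sub hn, Nat.cast_one]
    ring
  rw [Finset.sum_congr rfl (fun i _ => this i), Finset.sum_const, card_univ, Fintype.card_fin,
    nsmul_eq_mul]
  field_simp
end
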